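/- Let R be a principal ideal domain with field of fractions F, let L be a free R-module of finite rank, V = F ⊗_R L, W ⊆ V an F-subspace, and M = W ∩ L. Then M is a free R-module whose rank equals the dimension of W over F. -/

import Mathlib

open scoped TensorProduct nonZeroDivisors

/-- with `R` a PID, `F` its fraction field, `L` a finite free `R`-module,
`V = F ⊗[R] L`, `W ⊆ V` an `F`-subspace and `M = W ∩ L`, the `R`-module `M` is free of
rank equal to `dim_F W`. -/
theorem stmt1.{u, v, w} (R : Type u) (F : Type v) (L : Type w) [CommRing R] [IsDomain R] [IsPrincipalIdealRing R]
    [Field F] [Algebra R F] [IsFractionRing R F]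
    [AddCommGroup L] [Module R L] [Module.Free R L] [Module.Finite R L]
    (W : Submodule F (F ⊗[R] L))
    (M : Submodule R L)
    (hM : ∀ m : L, m ∈ M ↔ (1 : F) ⊗ₜ[R] m ∈ W) :
    Module.Free R M ∧ Cardinal.lift.{v} (Module.rank R M) = Cardinal.lift.{w} (Module.rank F W) := by
  -- the canonical map `L → F ⊗ L`
  set j : L →ₗ[R] F ⊗[R] L := TensorProduct.mk R F L 1 with hj
  have hjloc : IsLocalizedModule R⁰ j :=
    (isLocalizedModule_iff_isBaseChange R⁰ F j).mpr (TensorProduct.isBaseChange R L F)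
  -- the map `M → W`
  have hmem : ∀ m : M, j m.1 ∈ W := fun m => (hM m.1).mp m.2
  let f : M →ₗ[R] W :=
    { toFun := fun m => ⟨j m.1, hmem m⟩
      map_add' := fun x y => by ext; simp
      map_smul' := fun r x => by ext; simp }
  have hf : ∀ m : M, (f m : F ⊗[R] L) = j m.1 := fun _ => rfl
  have hfloc : IsLocalizedModule R⁰ f := by
    constructor
    · intro s
      rw [Module.End.isUnit_iff]
      have hs : algebraMap R F s ≠ 0 :=
        IsFractionRing.to_map_ne_zero_of_mem_nonZeroDivisors s.2
      constructor
      · intro x y hxy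
        have : (s : R) • x = (s : R) • y := hxy
        have h2 : algebraMap R F s • x = algebraMap R F s • y := by
          rwa [algebraMap_smul, algebraMap_smul]
        exact smul_right_injective W hs h2
      · intro y
        refine ⟨(algebraMap R F s)⁻¹ • y, ?_⟩
        show (s : R) • ((algebraMap R F s)⁻¹ • y) = y
        rw [← algebraMap_smul F (s : R), smul_smul, mul_inv_cancel₀ hs, one_smul]
    · intro y
      obtain ⟨⟨m, s⟩, hms⟩ := IsLocalizedModule.surj R⁰ j (y : F ⊗[R] L)
      have hms' : (s : R) • (y : F ⊗[R] L) = j m := by simpa [Submonoid.smul_def] using hms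
      have hmW : m ∈ M := by
        rw [hM]
        have : ((s : R) • (y : F ⊗[R] L)) ∈ W := W.smul_of_tower_mem _ y.2
        rw [hms'] at this
        exact this
      refine ⟨⟨⟨m, hmW⟩, s⟩, ?_⟩
      ext
      simpa [hf] using hms
    · intro x y hxy
      have : j x.1 = j y.1 := congrArg Subtype.val hxy
      obtain ⟨c, hc⟩ := IsLocalizedModule.exists_of_eq (S := R⁰) (f := j) this
      exact ⟨c, Subtype.ext hc⟩
  have hfree : Module.Free R M := by
    have : IsNoetherian R L := inferInstance
    infer_instance
  refine ⟨hfree, ?_⟩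
  have := IsLocalizedModule.lift_rank_eq (M := M) (N := W) R⁰ f le_rfl
  rw [← IsLocalization.rank_eq F R⁰ (N := W) le_rfl] at this
  -- `this : lift (rank F W) = lift (rank R M)`
  rw [← Cardinal.lift_umax]
  exact this.symm
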